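/- arXiv:2511.10565 — 2 statements merged into one kernel-verified Lean document; each statement's English description precedes it below -/
import Mathlib

section
/- The less-sequencing relation ≲ is transitive: if e₁ ≲ e₂ and e₂ ≲ e₃ then e₁ ≲ e₃. -/
/-- Expressions: values (constants), sequencing of a value before an expression,
let-bindings, and conditionals. -/
inductive Expr : Type
  | val : Nat → Expr
  | seq : Nat → Expr → Expr
  | letE : Expr → Expr → Expr
  | ite : Nat → Expr → Expr → Expr

/-- The less-sequencing relation `≲`, defined by rules:
(a) `v ≲ v` for values; (b) `e₁ ≲ e₂` implies `e₁ ≲ (v ; e₂)`;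
(c) congruence for let; (d) congruence for if with identical guard. -/
inductive Less : Expr → Expr → Prop
  | val (v : Nat) : Less (.val v) (.val v)
  | addSeq (v : Nat) {e₁ e₂ : Expr} : Less e₁ e₂ → Less e₁ (.seq v e₂)
  | letE {e₁ e₁' e₂ e₂' : Expr} : Less e₁ e₁' → Less e₂ e₂' →
      Less (.letE e₁ e₂) (.letE e₁' e₂')
  | ite (v : Nat) {e₁ e₁' e₂ e₂' : Expr} : Less e₁ e₁' → Less e₂ e₂' →
      Less (.ite v e₁ e₂) (.ite v e₁' e₂')

/-- The less-sequencing relation is transitive. -/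
theorem Less.transitive {e₁ e₂ e₃ : Expr} (h₁ : Less e₁ e₂) (h₂ : Less e₂ e₃) :
    Less e₁ e₃ := by
  induction h₂ generalizing e₁ with
  | val v => exact h₁
  | addSeq v h ih => exact .addSeq v (ih h₁)
  | letE ha hb iha ihb =>
    cases h₁ with
    | letE pa pb => exact .letE (iha pa) (ihb pb)
  | ite v ha hb iha ihb =>
    cases h₁ with
    | ite _ pa pb => exact .ite v (iha pa) (ihb pb)
end

section
/- Two traces are equivalent under ≈ if and only if they have the same sequence of non-silent events, i.e., erasing all silent events • from each yields equal lists. -/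
/-- Events: observable events from `E` or the silent event `•`. -/
abbrev Event (E : Type) := E ⊕ Unit

/-- The silent event `•`. -/
def silentEv {E : Type} : Event E := Sum.inr ()

/-- Trace equivalence `≈`, generated by: reflexivity; appending a silent event;
symmetry; append-congruence; transitivity. -/
inductive TraceEq {E : Type} : List (Event E) → List (Event E) → Prop
  | refl (t : List (Event E)) : TraceEq t t
  | silent (t : List (Event E)) : TraceEq t (t ++ [silentEv])
  | symm {t₁ t₂ : List (Event E)} : TraceEq t₁ t₂ → TraceEq t₂ t₁
  | append (a : Event E) {t₁ t₂ : List (Event E)} :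
      TraceEq t₁ t₂ → TraceEq (t₁ ++ [a]) (t₂ ++ [a])
  | trans {t₁ t₂ t₃ : List (Event E)} :
      TraceEq t₁ t₂ → TraceEq t₂ t₃ → TraceEq t₁ t₃

/-- Erase all silent events from a trace, keeping the observable events. -/
def eraseSilent {E : Type} (t : List (Event E)) : List E :=
  t.filterMap Sum.getLeft?

lemma traceEq_canon {E : Type} (t : List (Event E)) :
    TraceEq t ((eraseSilent t).map Sum.inl) := by
  induction t using List.reverseRecOn with
  | nil => exact TraceEq.refl _
  | append_singleton t a ih =>
    cases a with
    | inl e =>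
      have : eraseSilent (t ++ [Sum.inl e]) = eraseSilent t ++ [e] := by
        simp [eraseSilent]
      rw [this, List.map_append]
      exact TraceEq.append _ ih
    | inr u =>
      have : eraseSilent (t ++ [Sum.inr u]) = eraseSilent t := by
        simp [eraseSilent]
      rw [this]
      exact ((TraceEq.silent t).symm).trans ih

/-- Two traces are equivalent under `≈` iff erasing all silent events yields
equal lists of observable events. -/
theorem traceEq_iff_eraseSilent {E : Type} (t₁ t₂ : List (Event E)) :
    TraceEq t₁ t₂ ↔ eraseSilent t₁ = eraseSilent t₂ := by
  constructor
  · intro h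
    induction h with
    | refl t => rfl
    | silent t => simp [eraseSilent, silentEv]
    | symm _ ih => exact ih.symm
    | append a _ ih => simp [eraseSilent] at ih ⊢; simp [ih]
    | trans _ _ ih1 ih2 => exact ih1.trans ih2
  · intro h
    exact (traceEq_canon t₁).trans (h ▸ (traceEq_canon t₂).symm)
end
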